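/- For any d×d positive semidefinite complex (Hermitian) matrix J and any d×d positive definite real symmetric matrix G, the minimum of Tr(GV) over all d×d real symmetric matrices V satisfying V ≥ J (in the Loewner order on complex Hermitian matrices, viewing V as complex) equals Tr(G·Re J) + Tr|√G (Im J) √G|, where |·| denotes the matrix absolute value. -/

import Mathlib

open Matrix
open scoped ComplexOrder
noncomputable section

/-- Entrywise real part, as a complex matrix. -/
def reM {m n : Type*} (J : Matrix m n ℂ) : Matrix m n ℂ := fun i j => ((J i j).re : ℂ)

/-- Entrywise imaginary part, as a complex matrix. -/
def imM {m n : Type*} (J : Matrix m n ℂ) : Matrix m n ℂ := fun i j => ((J i j).im : ℂ)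

/-- A complex matrix has all real entries. -/
def IsRealMat {m n : Type*} (A : Matrix m n ℂ) : Prop := ∀ i j, (A i j).im = 0

/-- The positive semidefinite square root of a positive semidefinite matrix (removed from
Mathlib; restated with its former definition). -/
def Matrix.PosSemidef.sqrt {n 𝕜 : Type*} [Fintype n] [DecidableEq n] [RCLike 𝕜]
    {A : Matrix n n 𝕜} (hA : A.PosSemidef) : Matrix n n 𝕜 :=
  (hA.1.eigenvectorUnitary : Matrix n n 𝕜) * diagonal ((↑) ∘ (√·) ∘ hA.1.eigenvalues) *
    (star hA.1.eigenvectorUnitary : Matrix n n 𝕜)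

/-- Matrix absolute value `|A| = √(Aᴴ A)`. -/
def matAbs {n : Type*} [Fintype n] [DecidableEq n] (A : Matrix n n ℂ) : Matrix n n ℂ :=
  (Matrix.posSemidef_conjTranspose_mul_self A).sqrt

namespace Matrix.PosSemidef
variable {n : Type*} [Fintype n] [DecidableEq n]
open scoped MatrixOrder in
lemma sqrt_eq_cfc_sqrt {A : Matrix n n ℂ} (hA : A.PosSemidef) : hA.sqrt = CFC.sqrt A := by
  rw [CFC.sqrt_eq_cfc, cfc_nnreal_eq_real _ A, hA.1.cfc_eq]
  simp only [IsHermitian.cfc, Unitary.conjStarAlgAut_apply, PosSemidef.sqrt]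
  congr 3
  funext i
  simp [Real.coe_sqrt, Real.coe_toNNReal', max_eq_left (hA.eigenvalues_nonneg i)]

open scoped MatrixOrder in
lemma posSemidef_sqrt {A : Matrix n n ℂ} (hA : A.PosSemidef) : hA.sqrt.PosSemidef := by
  rw [sqrt_eq_cfc_sqrt]; exact (CFC.sqrt_nonneg A).posSemidef

open scoped MatrixOrder in
lemma sq_sqrt {A : Matrix n n ℂ} (hA : A.PosSemidef) : hA.sqrt ^ 2 = A := by
  rw [sqrt_eq_cfc_sqrt]; exact CFC.sq_sqrt A hA.nonneg

open scoped MatrixOrder in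
lemma sqrt_mul_self {A : Matrix n n ℂ} (hA : A.PosSemidef) : hA.sqrt * hA.sqrt = A := by
  rw [sqrt_eq_cfc_sqrt]; exact CFC.sqrt_mul_sqrt_self A hA.nonneg

open scoped MatrixOrder in
lemma eq_sqrt_of_sq_eq {A B : Matrix n n ℂ} (hA : A.PosSemidef) (hB : B.PosSemidef)
    (h : A ^ 2 = B) : A = hB.sqrt := by
  rw [sqrt_eq_cfc_sqrt, eq_comm, CFC.sqrt_eq_iff B A hB.nonneg hA.nonneg, ← sq, h]
end Matrix.PosSemidef

set_option linter.unusedSectionVars false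

variable {n : Type*} [Fintype n] [DecidableEq n]

lemma psd_diag {A : Matrix n n ℂ} (hA : A.PosSemidef) (i : n) : 0 ≤ A i i := by
  exact hA.diag_nonneg

lemma matAbs_eq {A B : Matrix n n ℂ} (h : Aᴴ * A = Bᴴ * B) : matAbs A = matAbs B :=
  Matrix.PosSemidef.eq_sqrt_of_sq_eq (Matrix.posSemidef_conjTranspose_mul_self A).posSemidef_sqrt
    (Matrix.posSemidef_conjTranspose_mul_self B)
    (by rw [(Matrix.posSemidef_conjTranspose_mul_self A).sq_sqrt, h])

lemma matAbs_hermitian {C : Matrix n n ℂ} (hC : C.IsHermitian) :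
    matAbs C = (hC.eigenvectorUnitary : Matrix n n ℂ) *
      diagonal (RCLike.ofReal ∘ (fun i => |hC.eigenvalues i|)) *
      (star (hC.eigenvectorUnitary : Matrix n n ℂ)) := by
  symm
  apply Matrix.PosSemidef.eq_sqrt_of_sq_eq
  · exact Matrix.PosSemidef.mul_mul_conjTranspose_same
      (Matrix.PosSemidef.diagonal (fun i =>
        RCLike.ofReal_nonneg.mpr (abs_nonneg _))) _
  · set U : Matrix n n ℂ := (hC.eigenvectorUnitary : Matrix n n ℂ) with hUdef
    have hU : star U * U = 1 := Matrix.UnitaryGroup.star_mul_self _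
    have key : ∀ f g : n → ℂ, (U * diagonal f * star U) * (U * diagonal g * star U)
        = U * diagonal (fun i => f i * g i) * star U := by
      intro f g
      simp only [Matrix.mul_assoc]
      rw [← Matrix.mul_assoc (star U) U, hU, Matrix.one_mul,
        ← Matrix.mul_assoc (diagonal f), Matrix.diagonal_mul_diagonal]
    have h2 : Cᴴ * C = C * C := by rw [hC.eq]
    rw [pow_two, key, h2]
    conv_rhs => rw [hC.spectral_theorem, Unitary.conjStarAlgAut_apply]
    rw [key]
    simp only [Function.comp_apply, ← RCLike.ofReal_mul, ← sq, ← RCLike.ofReal_pow, sq_abs]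

lemma trace_matAbs_hermitian {C : Matrix n n ℂ} (hC : C.IsHermitian) :
    Matrix.trace (matAbs C) = ((∑ i, |hC.eigenvalues i| : ℝ) : ℂ) := by
  rw [matAbs_hermitian hC, Matrix.trace_mul_cycle, Matrix.UnitaryGroup.star_mul_self,
    Matrix.one_mul, Matrix.trace_diagonal]
  push_cast
  rfl

lemma trace_matAbs_le {C N : Matrix n n ℂ} (hC : C.IsHermitian)
    (h1 : (N - C).PosSemidef) (h2 : (N + C).PosSemidef) :
    (Matrix.trace (matAbs C)).re ≤ (Matrix.trace N).re := by
  set U : Matrix n n ℂ := (hC.eigenvectorUnitary : Matrix n n ℂ) with hUdef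
  have hU : star U * U = 1 := Matrix.UnitaryGroup.star_mul_self _
  have hU' : U * star U = 1 := (Matrix.mem_unitaryGroup_iff).mp hC.eigenvectorUnitary.2
  have htrN : Matrix.trace N = Matrix.trace (star U * N * U) := by
    rw [Matrix.trace_mul_cycle, hU', Matrix.one_mul]
  have hD : star U * C * U = diagonal (RCLike.ofReal ∘ hC.eigenvalues) := by
    conv_lhs => rw [hC.spectral_theorem]
    simp only [Unitary.conjStarAlgAut_apply, Unitary.coe_star, Matrix.mul_assoc]
    rw [← Matrix.mul_assoc (star U) U, hU, Matrix.one_mul, Matrix.mul_one]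
  have hsub : ∀ (A B : Matrix n n ℂ), star U * (A - B) * U = star U * A * U - star U * B * U := by
    intro A B; noncomm_ring
  have hadd : ∀ (A B : Matrix n n ℂ), star U * (A + B) * U = star U * A * U + star U * B * U := by
    intro A B; noncomm_ring
  have p1 := h1.conjTranspose_mul_mul_same U
  have p2 := h2.conjTranspose_mul_mul_same U
  rw [← Matrix.star_eq_conjTranspose, hsub, hD] at p1
  rw [← Matrix.star_eq_conjTranspose, hadd, hD] at p2
  have hbound : ∀ i, |hC.eigenvalues i| ≤ ((star U * N * U) i i).re := by
    intro i
    have q1 := psd_diag p1 i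
    have q2 := psd_diag p2 i
    simp only [Matrix.sub_apply, Matrix.add_apply, Matrix.diagonal_apply_eq] at q1 q2
    rw [Complex.le_def] at q1 q2
    have r1 := q1.1
    have r2 := q2.1
    simp only [Complex.zero_re, Complex.sub_re, Complex.add_re] at r1 r2
    have : ((RCLike.ofReal ∘ hC.eigenvalues) i : ℂ).re = hC.eigenvalues i := by
      simp [Function.comp]
    rw [this] at r1 r2
    rw [abs_le]
    constructor <;> linarith
  rw [trace_matAbs_hermitian hC, htrN]
  simp only [Complex.ofReal_re, Matrix.trace, Matrix.diag, Complex.re_sum]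
  exact Finset.sum_le_sum fun i _ => hbound i

lemma matAbs_sub_posSemidef {H : Matrix n n ℂ} (hH : H.IsHermitian) :
    (matAbs H - H).PosSemidef := by
  set U : Matrix n n ℂ := (hH.eigenvectorUnitary : Matrix n n ℂ) with hUdef
  have e : matAbs H - H = U * diagonal (RCLike.ofReal ∘ (fun i => |hH.eigenvalues i|)) * star U -
      U * diagonal (RCLike.ofReal ∘ hH.eigenvalues) * star U := by
    rw [matAbs_hermitian hH]
    congr 1
    exact hH.spectral_theorem
  rw [e]
  have key : U * diagonal (RCLike.ofReal ∘ (fun i => |hH.eigenvalues i|)) * star U -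
      U * diagonal (RCLike.ofReal ∘ hH.eigenvalues) * star U =
      U * diagonal (fun i => ((|hH.eigenvalues i| - hH.eigenvalues i : ℝ) : ℂ)) * star U := by
    have hfun : (fun i => ((|hH.eigenvalues i| - hH.eigenvalues i : ℝ) : ℂ)) =
        fun i => (RCLike.ofReal ∘ fun i => |hH.eigenvalues i|) i - (RCLike.ofReal ∘ hH.eigenvalues) i := by
      funext i; simp [Complex.ofReal_sub]
    rw [hfun, ← diagonal_sub]
    noncomm_ring
  rw [key, show star U = Uᴴ from rfl]
  exact Matrix.PosSemidef.mul_mul_conjTranspose_same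
    (Matrix.PosSemidef.diagonal (by
      intro i
      simp only [Pi.zero_apply]
      rw [Complex.zero_le_real]
      linarith [le_abs_self (hH.eigenvalues i)])) U

lemma matAbs_add_posSemidef {H : Matrix n n ℂ} (hH : H.IsHermitian) :
    (matAbs H + H).PosSemidef := by
  have h := matAbs_sub_posSemidef hH.neg
  have habs : matAbs (-H) = matAbs H := matAbs_eq (by simp)
  rw [habs, sub_neg_eq_add] at h
  exact h

/-- entrywise conjugation -/
def cj {m p : Type*} (A : Matrix m p ℂ) : Matrix m p ℂ := A.map (starRingEnd ℂ)

lemma cj_mul (A B : Matrix n n ℂ) : cj (A * B) = cj A * cj B := Matrix.map_mul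
lemma cj_one : cj (1 : Matrix n n ℂ) = 1 := Matrix.map_one _ (map_zero _) (map_one _)
lemma cj_sub {m p : Type*} (A B : Matrix m p ℂ) : cj (A - B) = cj A - cj B := by
  ext i j; simp [cj]
lemma cj_add {m p : Type*} (A B : Matrix m p ℂ) : cj (A + B) = cj A + cj B := by
  ext i j; simp [cj]
lemma cj_smul {m p : Type*} (z : ℂ) (A : Matrix m p ℂ) :
    cj (z • A) = (starRingEnd ℂ z) • cj A := by
  ext i j; simp [cj]

lemma cj_posSemidef {A : Matrix n n ℂ} (hA : A.PosSemidef) : (cj A).PosSemidef := by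
  have : cj A = Aᵀ := by
    ext i j
    have := congrFun (congrFun hA.1.eq i) j
    simp only [Matrix.conjTranspose_apply] at this
    simp [cj, ← this]
  rw [this]; exact hA.transpose

lemma cj_sqrt {A : Matrix n n ℂ} (hA : A.PosSemidef) (h : cj A = A) :
    cj hA.sqrt = hA.sqrt := by
  exact Matrix.PosSemidef.eq_sqrt_of_sq_eq (cj_posSemidef hA.posSemidef_sqrt) hA
    (by rw [pow_two, ← cj_mul, ← pow_two, hA.sq_sqrt, h])

lemma cj_inv {A : Matrix n n ℂ} (hdet : IsUnit A.det) (h : cj A = A) :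
    cj A⁻¹ = A⁻¹ := by
  symm
  apply Matrix.inv_eq_right_inv
  nth_rewrite 1 [← h]
  rw [← cj_mul, Matrix.mul_nonsing_inv _ hdet, cj_one]

lemma cj_conjTranspose {m p : Type*} (A : Matrix m p ℂ) : cj (Aᴴ) = (cj A)ᴴ := by
  ext i j; simp [cj]

lemma isRealMat_iff_cj {m p : Type*} {A : Matrix m p ℂ} : IsRealMat A ↔ cj A = A := by
  constructor
  · intro h; ext i j
    simp only [cj, Matrix.map_apply]
    exact Complex.conj_eq_iff_im.mpr (h i j)
  · intro h i j
    exact Complex.conj_eq_iff_im.mp (congrFun (congrFun h i) j)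

lemma cj_reM {m p : Type*} (J : Matrix m p ℂ) : cj (reM J) = reM J := by
  ext i j; simp [cj, reM]
lemma cj_imM {m p : Type*} (J : Matrix m p ℂ) : cj (imM J) = imM J := by
  ext i j; simp [cj, imM]

lemma J_decomp {m : Type*} (J : Matrix m m ℂ) : J = reM J + Complex.I • imM J := by
  ext i j
  simp only [Matrix.add_apply, Matrix.smul_apply, reM, imM, smul_eq_mul]
  apply Complex.ext <;> simp

lemma reM_hermitian {m : Type*} {J : Matrix m m ℂ} (hJ : J.IsHermitian) :
    (reM J).IsHermitian := by
  ext i j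
  have := congrFun (congrFun hJ.eq i) j
  simp only [Matrix.conjTranspose_apply] at this ⊢
  simp only [reM]
  rw [← this]
  simp

lemma imM_antisym {m : Type*} {J : Matrix m m ℂ} (hJ : J.IsHermitian) :
    (imM J)ᴴ = -(imM J) := by
  ext i j
  have h := congrFun (congrFun hJ.eq i) j
  simp only [Matrix.conjTranspose_apply] at h
  simp only [Matrix.conjTranspose_apply, Matrix.neg_apply, imM]
  rw [← h]
  simp

/-- For a `d×d` positive semidefinite complex matrix `J` and a `d×d` positive definite real
symmetric matrix `G`, the minimum of `Tr(G V)` over real symmetric matrices `V ≥ J` (Loewner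
order) equals `Tr(G Re J) + Tr|√G (Im J) √G|`. -/
theorem min_trace_real_majorant {d : ℕ} (J G : Matrix (Fin d) (Fin d) ℂ)
    (hJ : J.PosSemidef) (hG : G.PosDef) (hGreal : IsRealMat G) :
    IsLeast {x : ℝ | ∃ V : Matrix (Fin d) (Fin d) ℂ, IsRealMat V ∧ V.IsHermitian ∧
        (V - J).PosSemidef ∧ x = (Matrix.trace (G * V)).re}
      ((Matrix.trace (G * reM J)).re +
        (Matrix.trace (matAbs (hG.posSemidef.sqrt * imM J * hG.posSemidef.sqrt))).re) := by
  set R : Matrix (Fin d) (Fin d) ℂ := hG.posSemidef.sqrt with hRdef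
  set B : Matrix (Fin d) (Fin d) ℂ := imM J with hBdef
  set C' : Matrix (Fin d) (Fin d) ℂ := R * B * R with hC'def
  set Ab : Matrix (Fin d) (Fin d) ℂ := matAbs C' with hAbdef
  have hRR : R * R = G := hG.posSemidef.sqrt_mul_self
  have hRpsd : R.PosSemidef := hG.posSemidef.posSemidef_sqrt
  have hRH : R.IsHermitian := hRpsd.1
  have hGc : cj G = G := isRealMat_iff_cj.mp hGreal
  have hRc : cj R = R := cj_sqrt hG.posSemidef hGc
  have hdetR : IsUnit R.det := by
    rw [isUnit_iff_ne_zero]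
    intro h0
    have : G.det = 0 := by rw [← hRR, Matrix.det_mul, h0, mul_zero]
    exact hG.det_pos.ne' this
  have hinv1 : R⁻¹ * R = 1 := Matrix.nonsing_inv_mul _ hdetR
  have hinv2 : R * R⁻¹ = 1 := Matrix.mul_nonsing_inv _ hdetR
  have hRinvH : R⁻¹.IsHermitian := hRH.inv
  have hRinvc : cj R⁻¹ = R⁻¹ := cj_inv hdetR hRc
  have hBc : cj B = B := cj_imM J
  have hC'c : cj C' = C' := by rw [hC'def, cj_mul, cj_mul, hRc, hBc]
  have hC'anti : C'ᴴ = -C' := by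
    rw [hC'def, Matrix.conjTranspose_mul, Matrix.conjTranspose_mul, hRH.eq,
      imM_antisym hJ.1]
    noncomm_ring
  have hAbc : cj Ab = Ab := by
    rw [hAbdef, matAbs]
    exact cj_sqrt _ (by rw [cj_mul, cj_conjTranspose, hC'c])
  have hAbpsd : Ab.PosSemidef := (Matrix.posSemidef_conjTranspose_mul_self C').posSemidef_sqrt
  -- the Hermitian matrix H = i C'
  set H : Matrix (Fin d) (Fin d) ℂ := Complex.I • C' with hHdef
  have hHH : H.IsHermitian := by
    rw [Matrix.IsHermitian, hHdef, Matrix.conjTranspose_smul, hC'anti]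
    simp [Complex.star_def, Complex.conj_I]
  have habsHC : matAbs H = Ab := by
    rw [hAbdef]
    apply matAbs_eq
    rw [hHdef, Matrix.conjTranspose_smul, Matrix.smul_mul, Matrix.mul_smul, smul_smul]
    simp [Complex.star_def, Complex.conj_I]
  have hJd : J = reM J + Complex.I • B := J_decomp J
  -- trace helper
  have htr2 : ∀ X : Matrix (Fin d) (Fin d) ℂ,
      Matrix.trace (G * (R⁻¹ * X * R⁻¹)) = Matrix.trace X := by
    intro X
    have h1 : G * (R⁻¹ * X * R⁻¹) = R * (R * R⁻¹) * (X * R⁻¹) := by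
      rw [← hRR]; noncomm_ring
    rw [h1, hinv2, Matrix.mul_one, ← Matrix.mul_assoc, Matrix.trace_mul_cycle,
      hinv1, Matrix.one_mul]
  constructor
  · -- membership : the minimizer
    refine ⟨reM J + R⁻¹ * Ab * R⁻¹, ?_, ?_, ?_, ?_⟩
    · rw [isRealMat_iff_cj, cj_add, cj_reM, cj_mul, cj_mul, hRinvc, hAbc]
    · have h2 : (R⁻¹ * Ab * R⁻¹).PosSemidef := by
        have := hAbpsd.mul_mul_conjTranspose_same R⁻¹
        rwa [hRinvH.eq] at this
      exact (reM_hermitian hJ.1).add h2.1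
    · have hVJ : reM J + R⁻¹ * Ab * R⁻¹ - J = R⁻¹ * (Ab - H) * R⁻¹ := by
        nth_rewrite 2 [hJd]
        rw [hHdef]
        have h3 : R⁻¹ * (Complex.I • C') * R⁻¹ = Complex.I • B := by
          rw [Matrix.mul_smul, Matrix.smul_mul]
          refine congrArg (Complex.I • ·) ?_
          calc R⁻¹ * C' * R⁻¹ = (R⁻¹ * R) * B * (R * R⁻¹) := by rw [hC'def]; noncomm_ring
            _ = B := by rw [hinv1, hinv2, Matrix.one_mul, Matrix.mul_one]
        rw [Matrix.mul_sub, Matrix.sub_mul, h3]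
        abel
      rw [hVJ]
      have hsub : (Ab - H).PosSemidef := by
        have := matAbs_sub_posSemidef hHH
        rwa [habsHC] at this
      have := hsub.mul_mul_conjTranspose_same R⁻¹
      rwa [hRinvH.eq] at this
    · rw [Matrix.mul_add, Matrix.trace_add, htr2, Complex.add_re]
  · -- lower bound
    rintro x ⟨V, hVreal, hVH, hVJ, rfl⟩
    set M : Matrix (Fin d) (Fin d) ℂ := V - reM J with hMdef
    have hMc : cj M = M := by
      rw [hMdef, cj_sub, cj_reM, isRealMat_iff_cj.mp hVreal]
    have h1 : (M - Complex.I • B).PosSemidef := by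
      have : V - J = M - Complex.I • B := by rw [hMdef, sub_sub, ← hJd]
      rwa [this] at hVJ
    have h2 : (M + Complex.I • B).PosSemidef := by
      have := cj_posSemidef h1
      rwa [cj_sub, hMc, cj_smul, Complex.conj_I, neg_smul, cj_imM, sub_neg_eq_add] at this
    -- conjugate by R
    have p1 : (R * M * R - H).PosSemidef := by
      have := h1.mul_mul_conjTranspose_same R
      rw [hRH.eq] at this
      have e : R * (M - Complex.I • B) * R = R * M * R - H := by
        rw [hHdef, hC'def, Matrix.mul_sub, Matrix.sub_mul, Matrix.mul_smul, Matrix.smul_mul]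
      rwa [e] at this
    have p2 : (R * M * R + H).PosSemidef := by
      have := h2.mul_mul_conjTranspose_same R
      rw [hRH.eq] at this
      have e : R * (M + Complex.I • B) * R = R * M * R + H := by
        rw [hHdef, hC'def, Matrix.mul_add, Matrix.add_mul, Matrix.mul_smul, Matrix.smul_mul]
      rwa [e] at this
    have key := trace_matAbs_le hHH p1 p2
    rw [habsHC] at key
    -- trace of R M R
    have htrM : Matrix.trace (R * M * R) = Matrix.trace (G * V) - Matrix.trace (G * reM J) := by
      rw [Matrix.trace_mul_cycle, hRR, ← Matrix.trace_sub, ← Matrix.mul_sub]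
    rw [htrM, Complex.sub_re] at key
    linarith
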